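/- Let L : ℝ^d → ℝ be a convex function that is finite everywhere (hence continuous), and let L* be its Fenchel–Legendre transform. For every x in the effective domain of L*, there exists a sequence (x_m) in ℝ^d such that ∂L*(x_m) ≠ ∅ for all m, x_m → x, and L*(x_m) → L*(x). -/

import Mathlib

open Filter Topology

private lemma lsc_exists_min {X : Type*} [TopologicalSpace X]
    [FirstCountableTopology X]
    {f : X → EReal} (hf : LowerSemicontinuous f) {s : Set X}
    (hs : IsCompact s) (hne : s.Nonempty) :
    ∃ z ∈ s, ∀ y ∈ s, f z ≤ f y := by
  obtain ⟨u, -, hu_tend, hu_mem⟩ :=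
    exists_seq_tendsto_sInf (S := f '' s) (hne.image f) (OrderBot.bddBelow _)
  choose y hy hfy using hu_mem
  obtain ⟨z, hz, φ, hφ, hzt⟩ := hs.tendsto_subseq hy
  refine ⟨z, hz, fun w hw => ?_⟩
  have hle : f z ≤ sInf (f '' s) := by
    by_contra h
    push_neg at h
    obtain ⟨c, hc1, hc2⟩ := exists_between h
    have hev : ∀ᶠ n in atTop, c < f (y (φ n)) := hzt.eventually (hf z c hc2)
    have htt : Tendsto (fun n => f (y (φ n))) atTop (𝓝 (sInf (f '' s))) := by
      have := hu_tend.comp hφ.tendsto_atTop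
      simpa [Function.comp_def, hfy] using this
    exact absurd (ge_of_tendsto htt (hev.mono fun n hn => hn.le)) (not_le.2 hc1)
  exact hle.trans (sInf_le ⟨w, hw, rfl⟩)

/-- Finite-dimensional Brøndsted–Rockafellar: for a finite-valued convex `L : ℝ^d → ℝ` and its
Fenchel–Legendre transform `L*`, every point `x` of the effective domain of `L*` is the limit of
a sequence `x_m` of points with nonempty subdifferential `∂L*(x_m)`, with `L*(x_m) → L*(x)`. -/
theorem stmt12 {d : ℕ} (L : (Fin d → ℝ) → ℝ) (hconv : ConvexOn ℝ Set.univ L)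
    (Lstar : (Fin d → ℝ) → EReal)
    (hLstar : ∀ x : Fin d → ℝ,
      Lstar x = ⨆ t : Fin d → ℝ, (((∑ i, t i * x i) - L t : ℝ) : EReal))
    (x : Fin d → ℝ) (hx : Lstar x ≠ ⊤) :
    ∃ u : ℕ → (Fin d → ℝ),
      (∀ m : ℕ, Lstar (u m) ≠ ⊤ ∧ ∃ t : Fin d → ℝ, ∀ y : Fin d → ℝ,
        Lstar (u m) + (((∑ i, t i * (y i - u m i)) : ℝ) : EReal) ≤ Lstar y) ∧
      Tendsto u atTop (𝓝 x) ∧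
      Tendsto (fun m => Lstar (u m)) atTop (𝓝 (Lstar x)) := by
  classical
  have hterm : ∀ t y : Fin d → ℝ, (((∑ i, t i * y i) - L t : ℝ) : EReal) ≤ Lstar y := by
    intro t y
    rw [hLstar]
    exact le_iSup (fun t => (((∑ i, t i * y i) - L t : ℝ) : EReal)) t
  have hbot : ∀ y, Lstar y ≠ ⊥ := by
    intro y h
    have h0 := hterm 0 y
    rw [h] at h0
    exact absurd h0 (by simp)
  set g : (Fin d → ℝ) → ℝ := fun y => (Lstar y).toReal with hg
  have hgeq : ∀ y, Lstar y ≠ ⊤ → Lstar y = ((g y : ℝ) : EReal) := fun y hy =>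
    (EReal.coe_toReal hy (hbot y)).symm
  have htermR : ∀ t y, Lstar y ≠ ⊤ → (∑ i, t i * y i) - L t ≤ g y := by
    intro t y hy
    have h0 := hterm t y
    rw [hgeq y hy] at h0
    exact_mod_cast h0
  have hlowg : ∀ y, Lstar y ≠ ⊤ → -L 0 ≤ g y := by
    intro y hy
    have h0 := htermR 0 y hy
    simpa using h0
  have hconvex : ∀ y w : Fin d → ℝ, Lstar y ≠ ⊤ → Lstar w ≠ ⊤ → ∀ s : ℝ, 0 ≤ s → s ≤ 1 →
      Lstar (fun i => (1 - s) * y i + s * w i) ≤ (((1 - s) * g y + s * g w : ℝ) : EReal) := by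
    intro y w hy hw s hs0 hs1
    rw [hLstar]
    refine iSup_le fun t => ?_
    rw [EReal.coe_le_coe_iff]
    have hA := htermR t y hy
    have hB := htermR t w hw
    have hsum : ∑ i, t i * ((1 - s) * y i + s * w i)
        = (1 - s) * (∑ i, t i * y i) + s * (∑ i, t i * w i) := by
      rw [Finset.mul_sum, Finset.mul_sum, ← Finset.sum_add_distrib]
      exact Finset.sum_congr rfl fun i _ => by ring
    rw [hsum]
    have h1 := mul_le_mul_of_nonneg_left hA (by linarith : (0:ℝ) ≤ 1 - s)
    have h2 := mul_le_mul_of_nonneg_left hB hs0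
    linarith
  have hlsc : LowerSemicontinuous Lstar := by
    have hfe : Lstar = fun y => ⨆ t : Fin d → ℝ, (((∑ i, t i * y i) - L t : ℝ) : EReal) :=
      funext hLstar
    rw [hfe]
    refine lowerSemicontinuous_iSup fun t => Continuous.lowerSemicontinuous ?_
    exact continuous_coe_real_ereal.comp
      (((continuous_finset_sum _ fun i _ => continuous_const.mul (continuous_apply i)).sub
        continuous_const))
  set Q : (Fin d → ℝ) → ℝ := fun y => ∑ i, (y i - x i) ^ 2 with hQdef
  have hQ0 : ∀ y, 0 ≤ Q y := fun y => Finset.sum_nonneg fun i _ => sq_nonneg _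
  have hQcont : Continuous Q :=
    continuous_finset_sum _ fun i _ => ((continuous_apply i).sub continuous_const).pow 2
  set K : ℝ := g x + L 0 with hKdef
  have hK0 : 0 ≤ K := by
    have := hlowg x hx
    simp only [hKdef]
    linarith
  set δ : ℝ := Real.sqrt (K + 1) with hδdef
  have hδK : Real.sqrt K < δ := Real.sqrt_lt_sqrt hK0 (by linarith)
  have hδ0 : 0 ≤ δ := Real.sqrt_nonneg _
  have hsK0 : 0 ≤ Real.sqrt K := Real.sqrt_nonneg _
  set B : Set (Fin d → ℝ) := Set.Icc (fun i => x i - δ) (fun i => x i + δ) with hBdef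
  have hxB : x ∈ B := by
    rw [hBdef, Set.mem_Icc]
    constructor <;> (intro i; dsimp; linarith)
  have hBcompact : IsCompact B := isCompact_Icc
  have hmin : ∀ m : ℕ, ∃ zz ∈ B, ∀ y ∈ B,
      Lstar zz + ((((m : ℝ) + 1) * Q zz : ℝ) : EReal)
        ≤ Lstar y + ((((m : ℝ) + 1) * Q y : ℝ) : EReal) := by
    intro m
    apply lsc_exists_min _ hBcompact ⟨x, hxB⟩
    refine hlsc.add' (Continuous.lowerSemicontinuous ?_) fun y =>
      EReal.continuousAt_add (Or.inr (EReal.coe_ne_bot _)) (Or.inr (EReal.coe_ne_top _))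
    exact continuous_coe_real_ereal.comp (continuous_const.mul hQcont)
  choose z hzB hzmin using hmin
  have hQx : Q x = 0 := by simp [hQdef]
  have key : ∀ m : ℕ, Lstar (z m) ≠ ⊤ ∧ g (z m) + ((m : ℝ) + 1) * Q (z m) ≤ g x := by
    intro m
    have h1 := hzmin m x hxB
    rw [hQx, mul_zero, hgeq x hx, EReal.coe_zero, add_zero] at h1
    have htop : Lstar (z m) ≠ ⊤ := by
      intro h
      rw [h, EReal.top_add_coe] at h1
      exact absurd h1 (by simp)
    refine ⟨htop, ?_⟩
    rw [hgeq _ htop, ← EReal.coe_add] at h1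
    exact_mod_cast h1
  have hgle : ∀ m, g (z m) ≤ g x := by
    intro m
    have h1 := (key m).2
    have h2 : (0:ℝ) ≤ ((m : ℝ) + 1) * Q (z m) := mul_nonneg (by positivity) (hQ0 _)
    linarith
  have hQle : ∀ m : ℕ, Q (z m) ≤ K / ((m : ℝ) + 1) := by
    intro m
    have h1 := (key m).2
    have h2 := hlowg (z m) (key m).1
    rw [le_div_iff₀ (by positivity), hKdef]
    linarith
  have hQK : ∀ m, Q (z m) ≤ K := by
    intro m
    refine (hQle m).trans ?_
    exact div_le_self hK0 (by push_cast; linarith [Nat.cast_nonneg (α := ℝ) m])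
  have hcoord : ∀ m i, |z m i - x i| ≤ Real.sqrt K := by
    intro m i
    rw [← Real.sqrt_sq_eq_abs]
    refine Real.sqrt_le_sqrt ?_
    calc (z m i - x i) ^ 2 ≤ Q (z m) :=
          Finset.single_le_sum (f := fun j => (z m j - x j) ^ 2)
            (fun j _ => sq_nonneg _) (Finset.mem_univ i)
      _ ≤ K := hQK m
  -- subgradient property
  have hsub : ∀ m : ℕ, ∀ y : Fin d → ℝ,
      Lstar (z m) + (((∑ i, (2 * ((m : ℝ) + 1) * (x i - z m i)) * (y i - z m i)) : ℝ) : EReal)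
        ≤ Lstar y := by
    intro m y
    by_cases hytop : Lstar y = ⊤
    · rw [hytop]; exact le_top
    set c : ℝ := (m : ℝ) + 1 with hcdef
    have hc0 : (0 : ℝ) < c := by positivity
    set P : ℝ := ∑ i, (z m i - x i) * (y i - z m i) with hPdef
    set Bq : ℝ := ∑ i, (y i - z m i) ^ 2 with hBqdef
    have hBq0 : 0 ≤ Bq := Finset.sum_nonneg fun i _ => sq_nonneg _
    have hsumt : ∑ i, (2 * c * (x i - z m i)) * (y i - z m i) = -(2 * c) * P := by
      rw [hPdef, Finset.mul_sum]
      exact Finset.sum_congr rfl fun i _ => by ring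
    rw [hgeq _ (key m).1, hgeq y hytop, hsumt, ← EReal.coe_add, EReal.coe_le_coe_iff]
    -- real goal : g (z m) + -(2*c) * P ≤ g y
    have hmain : g (z m) ≤ g y + 2 * c * P := by
      refine le_of_forall_pos_le_add fun ε hε => ?_
      set Mb : ℝ := (∑ i, |y i - z m i|) + 1 with hMbdef
      have hMb0 : 0 < Mb := by
        have : 0 ≤ ∑ i, |y i - z m i| := Finset.sum_nonneg fun i _ => abs_nonneg _
        simp only [hMbdef]; linarith
      have hMbge : ∀ i, |y i - z m i| ≤ Mb := by
        intro i
        have h1 : |y i - z m i| ≤ ∑ j, |y j - z m j| :=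
          Finset.single_le_sum (f := fun j => |y j - z m j|)
            (fun j _ => abs_nonneg _) (Finset.mem_univ i)
        simp only [hMbdef]; linarith
      set s : ℝ := min (min 1 (ε / (c * Bq + 1))) ((δ - Real.sqrt K) / Mb) with hsdef
      have hs0 : 0 < s := by
        refine lt_min (lt_min one_pos (by positivity)) ?_
        apply div_pos (by linarith) hMb0
      have hs1 : s ≤ 1 := le_trans (min_le_left _ _) (min_le_left _ _)
      have hsε : s ≤ ε / (c * Bq + 1) := le_trans (min_le_left _ _) (min_le_right _ _)
      have hsδ : s * Mb ≤ δ - Real.sqrt K := by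
        have := min_le_right (min 1 (ε / (c * Bq + 1))) ((δ - Real.sqrt K) / Mb)
        rw [← hsdef] at this
        calc s * Mb ≤ ((δ - Real.sqrt K) / Mb) * Mb := by
              exact mul_le_mul_of_nonneg_right this hMb0.le
          _ = δ - Real.sqrt K := by field_simp
      have hysB : (fun i => (1 - s) * z m i + s * y i) ∈ B := by
        rw [hBdef, Set.mem_Icc]
        refine ⟨fun i => ?_, fun i => ?_⟩ <;> dsimp only
        all_goals {
          have h4 := abs_le.1 (hcoord m i)
          have h3 : s * |y i - z m i| ≤ δ - Real.sqrt K :=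
            le_trans (mul_le_mul_of_nonneg_left (hMbge i) hs0.le) hsδ
          have hb1 : s * (y i - z m i) ≤ s * |y i - z m i| :=
            mul_le_mul_of_nonneg_left (le_abs_self _) hs0.le
          have hb2 : -(s * |y i - z m i|) ≤ s * (y i - z m i) := by
            have := mul_le_mul_of_nonneg_left (neg_abs_le (y i - z m i)) hs0.le
            simpa [mul_neg] using this
          linarith [h4.1, h4.2, h3, hb1, hb2] }
      have hconv2 := hconvex (z m) y (key m).1 hytop s hs0.le hs1
      have hysne : Lstar (fun i => (1 - s) * z m i + s * y i) ≠ ⊤ := by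
        intro h
        rw [h] at hconv2
        exact absurd hconv2 (not_le.2 (EReal.coe_lt_top _))
      have h1 := hzmin m _ hysB
      rw [hgeq _ (key m).1, hgeq _ hysne, ← EReal.coe_add, ← EReal.coe_add,
        EReal.coe_le_coe_iff] at h1
      have hgys : g (fun i => (1 - s) * z m i + s * y i) ≤ (1 - s) * g (z m) + s * g y := by
        rw [hgeq _ hysne, EReal.coe_le_coe_iff] at hconv2
        exact hconv2
      have hQys : Q (fun i => (1 - s) * z m i + s * y i)
          = Q (z m) + 2 * s * P + s ^ 2 * Bq := by
        rw [hQdef]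
        dsimp only
        calc ∑ i, ((1 - s) * z m i + s * y i - x i) ^ 2
            = ∑ i, ((z m i - x i) ^ 2 + (2 * s) * ((z m i - x i) * (y i - z m i))
                + s ^ 2 * (y i - z m i) ^ 2) := Finset.sum_congr rfl fun i _ => by ring
          _ = Q (z m) + 2 * s * P + s ^ 2 * Bq := by
              rw [Finset.sum_add_distrib, Finset.sum_add_distrib, ← Finset.mul_sum,
                ← Finset.mul_sum]
      rw [hQys] at h1
      rw [← hcdef] at h1
      have hdiv : g (z m) ≤ g y + 2 * c * P + s * (c * Bq) := by
        have h2 : s * g (z m) ≤ s * (g y + 2 * c * P + s * (c * Bq)) := by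
          nlinarith [h1, hgys]

        exact le_of_mul_le_mul_left h2 hs0
      have hscb : s * (c * Bq) ≤ ε := by
        have h3 : s * (c * Bq + 1) ≤ ε := by
          calc s * (c * Bq + 1) ≤ (ε / (c * Bq + 1)) * (c * Bq + 1) :=
                mul_le_mul_of_nonneg_right hsε (by positivity)
            _ = ε := by field_simp
        linarith [h3, hs0.le]
      linarith
    linarith [hmain]
  -- convergence of z to x
  have hQtend : Tendsto (fun m => Q (z m)) atTop (𝓝 0) := by
    apply squeeze_zero (fun m => hQ0 _) (fun m => hQle m)
    apply Tendsto.div_atTop (tendsto_const_nhds (x := K))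
    exact tendsto_atTop_add_const_right _ _ tendsto_natCast_atTop_atTop
  have hz_tend : Tendsto z atTop (𝓝 x) := by
    rw [tendsto_pi_nhds]
    intro i
    rw [tendsto_iff_dist_tendsto_zero]
    refine squeeze_zero (fun m => dist_nonneg) (g := fun m => Real.sqrt (Q (z m)))
      (fun m => ?_) ?_
    · rw [Real.dist_eq, ← Real.sqrt_sq_eq_abs]
      exact Real.sqrt_le_sqrt
        (Finset.single_le_sum (f := fun j => (z m j - x j) ^ 2)
          (fun j _ => sq_nonneg _) (Finset.mem_univ i))
    · have := (Real.continuous_sqrt.tendsto 0).comp hQtend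
      simpa [Function.comp_def] using this
  have hLle : ∀ m, Lstar (z m) ≤ Lstar x := by
    intro m
    rw [hgeq _ (key m).1, hgeq x hx, EReal.coe_le_coe_iff]
    exact hgle m
  have hLtend : Tendsto (fun m => Lstar (z m)) atTop (𝓝 (Lstar x)) := by
    rw [tendsto_order]
    constructor
    · intro cc hcc
      rw [hLstar x, lt_iSup_iff] at hcc
      obtain ⟨t, ht⟩ := hcc
      have htend : Tendsto (fun m => (((∑ i, t i * z m i) - L t : ℝ) : EReal)) atTop
          (𝓝 (((∑ i, t i * x i) - L t : ℝ) : EReal)) := by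
        apply (continuous_coe_real_ereal.tendsto _).comp
        refine Tendsto.sub ?_ tendsto_const_nhds
        refine tendsto_finset_sum _ fun i _ => ?_
        exact tendsto_const_nhds.mul (((continuous_apply i).tendsto x).comp hz_tend)
      filter_upwards [htend.eventually_const_lt ht] with m hm
      exact hm.trans_le (hterm t (z m))
    · intro cc hcc
      exact Eventually.of_forall fun m => lt_of_le_of_lt (hLle m) hcc
  exact ⟨z, fun m => ⟨(key m).1,
    ⟨fun i => 2 * ((m : ℝ) + 1) * (x i - z m i), fun y => hsub m y⟩⟩, hz_tend, hLtend⟩
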